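/- Let T be a tree rooted at r with children x₁,…,x_s of r and subtrees T₁,…,T_s rooted at them, ordered so that ℓ_B(T₁,x₁) ≥ ⋯ ≥ ℓ_B(T_s,x_s). In the rooted-path Maker-Breaker game where Maker tries to claim a longest possible path starting at r: if T = {r} then ℓ_M(T,r) = ℓ_B(T,r) = 0; otherwise ℓ_M(T,r) = 1 + ℓ_B(T₁,x₁) and ℓ_B(T,r) = 1 + ℓ_B(T₂,x₂) (with the convention that the term is 0 when the corresponding subtree does not exist). -/

import Mathlib

open Finset

variable {α : Type*} [DecidableEq α]

/-- Play of a Maker-Breaker game: `MWin P n b U M` holds when, with `n` moves remaining,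
`b = true` iff it is Maker's turn, `U` the unclaimed elements and `M` Maker's claimed
elements, Maker can force the final position to satisfy `P` on her claimed set. -/
def MWin (P : Finset α → Prop) : ℕ → Bool → Finset α → Finset α → Prop
  | 0, _, _, M => P M
  | n + 1, true, U, M => ∃ e ∈ U, MWin P n false (U.erase e) (insert e M)
  | n + 1, false, U, M => ∀ e ∈ U, MWin P n true (U.erase e) M

/-- Maker (playing first) has a winning strategy on board `X` with winning sets `F`:
she can ensure that at the end of the game she has claimed all elements of some `W ∈ F`. -/
def MakerWins (X : Finset α) (F : Set (Finset α)) : Prop :=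
  MWin (fun M => ∃ W ∈ F, W ⊆ M) X.card true X ∅

/-- Dual play, recording Breaker's claimed set `B`. -/
def BWin (Q : Finset α → Prop) : ℕ → Bool → Finset α → Finset α → Prop
  | 0, _, _, B => Q B
  | n + 1, true, U, B => ∀ e ∈ U, BWin Q n false (U.erase e) B
  | n + 1, false, U, B => ∃ e ∈ U, BWin Q n true (U.erase e) (insert e B)

/-- Breaker (playing second) has a winning strategy on board `X` with winning sets `F`:
he can ensure claiming at least one element of every winning set. -/
def BreakerWins (X : Finset α) (F : Set (Finset α)) : Prop :=
  BWin (fun B => ∀ W ∈ F, ∃ e ∈ W, e ∈ B) X.card true X ∅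

/-- `MWinIn P n b U M`: Maker can force, within the next `n` half-moves, a position in
which her claimed set satisfies `P`. -/
def MWinIn (P : Finset α → Prop) : ℕ → Bool → Finset α → Finset α → Prop
  | 0, _, _, M => P M
  | n + 1, true, U, M => P M ∨ ∃ e ∈ U, MWinIn P n false (U.erase e) (insert e M)
  | n + 1, false, U, M => P M ∨ (U.Nonempty ∧ ∀ e ∈ U, MWinIn P n true (U.erase e) M)

/-- Maker (playing first) wins the game on board `X` with winning sets `F`
in at most `k` (Maker) moves. -/
def MakerWinsIn (X : Finset α) (F : Set (Finset α)) (k : ℕ) : Prop :=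
  MWinIn (fun M => ∃ W ∈ F, W ⊆ M) (2 * k) true X ∅

open SimpleGraph

/-- Maker's claimed edge set `M` contains a path of length at least `j` in `T` starting
at `r`. -/
def hasPathFrom {V : Type*} (T : SimpleGraph V) (r : V) (j : ℕ)
    (M : Finset (Sym2 V)) : Prop :=
  ∃ (v : V) (p : T.Walk r v), p.IsPath ∧ j ≤ p.length ∧ ∀ e ∈ p.edges, e ∈ M

/-- `ℓ_M(T, r)`: the longest path starting at `r` whose edges Maker can guarantee to claim
in the rooted path game on `T`, Maker moving first. -/
noncomputable def lM {V : Type*} [Finite V] [DecidableEq V]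
    (T : SimpleGraph V) (r : V) : ℕ :=
  sSup {j | MWin (hasPathFrom T r j) T.edgeSet.toFinite.toFinset.card true
    T.edgeSet.toFinite.toFinset ∅}

/-- `ℓ_B(T, r)`: the longest path starting at `r` whose edges Maker can guarantee to claim
in the rooted path game on `T`, Breaker moving first. -/
noncomputable def lB {V : Type*} [Finite V] [DecidableEq V]
    (T : SimpleGraph V) (r : V) : ℕ :=
  sSup {j | MWin (hasPathFrom T r j) T.edgeSet.toFinite.toFinset.card false
    T.edgeSet.toFinite.toFinset ∅}

/-- The vertex set of the subtree hanging from the child `x` of `r`: the component of `x`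
after deleting the edge `rx`. -/
def childVerts {V : Type*} (T : SimpleGraph V) (r x : V) : Set V :=
  {v | (T.deleteEdges {s(r, x)}).Reachable x v}


namespace MBGame

variable {α : Type*} [DecidableEq α]

set_option linter.unusedVariables false

variable {P Q : Finset α → Prop}

/-- Monotone target. -/
def Mono (P : Finset α → Prop) : Prop := ∀ ⦃S S' : Finset α⦄, S ⊆ S' → P S → P S'

theorem mwin_zero {b U M} : MWin P 0 b U M ↔ P M := by cases b <;> exact Iff.rfl

theorem mwin_succ_true {n U M} :
    MWin P (n+1) true U M ↔ ∃ e ∈ U, MWin P n false (U.erase e) (insert e M) := Iff.rfl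

theorem mwin_succ_false {n U M} :
    MWin P (n+1) false U M ↔ ∀ e ∈ U, MWin P n true (U.erase e) M := Iff.rfl

theorem mwin_mono_P (h : ∀ S, P S → Q S) :
    ∀ {n : ℕ} {b U M}, MWin P n b U M → MWin Q n b U M := by
  intro n
  induction n with
  | zero => intro b U M hm; rw [mwin_zero] at *; exact h _ hm
  | succ n ih =>
    intro b U M hm
    cases b with
    | true => obtain ⟨e, he, hw⟩ := hm; exact ⟨e, he, ih hw⟩
    | false => intro e he; exact ih (hm e he)

theorem mwin_shift {C : Finset α} :
    ∀ {n : ℕ} {b U M}, MWin P n b U (M ∪ C) ↔ MWin (fun S => P (S ∪ C)) n b U M := by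
  intro n
  induction n with
  | zero => intro b U M; rw [mwin_zero, mwin_zero]
  | succ n ih =>
    intro b U M
    cases b with
    | true =>
      rw [mwin_succ_true, mwin_succ_true]
      refine exists_congr fun e => and_congr_right fun he => ?_
      rw [← Finset.insert_union, ih]
    | false =>
      rw [mwin_succ_false, mwin_succ_false]
      exact forall_congr' fun e => forall_congr' fun he => ih

/-- L0: the final Maker set is between `M` and `M ∪ U`. -/
theorem mwin_exists_final :
    ∀ {n : ℕ} {b U M}, n ≤ U.card → MWin P n b U M →
      ∃ S, M ⊆ S ∧ S ⊆ M ∪ U ∧ P S := by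
  intro n
  induction n with
  | zero =>
    intro b U M _ hm
    exact ⟨M, Finset.Subset.refl _, Finset.subset_union_left, mwin_zero.1 hm⟩
  | succ n ih =>
    intro b U M hn hm
    cases b with
    | true =>
      obtain ⟨e, he, hw⟩ := hm
      have hcard : n ≤ (U.erase e).card := by
        rw [Finset.card_erase_of_mem he]; omega
      obtain ⟨S, hS1, hS2, hS3⟩ := ih hcard hw
      refine ⟨S, ?_, ?_, hS3⟩
      · exact (Finset.subset_insert e M).trans hS1
      · refine hS2.trans ?_
        intro x hx
        rcases Finset.mem_union.1 hx with hx | hx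
        · rcases Finset.mem_insert.1 hx with rfl | hx
          · exact Finset.mem_union_right _ he
          · exact Finset.mem_union_left _ hx
        · exact Finset.mem_union_right _ (Finset.erase_subset _ _ hx)
    | false =>
      have hU : U.Nonempty := by
        rw [← Finset.card_pos]; omega
      obtain ⟨e, he⟩ := hU
      have hcard : n ≤ (U.erase e).card := by
        rw [Finset.card_erase_of_mem he]; omega
      obtain ⟨S, hS1, hS2, hS3⟩ := ih hcard (hm e he)
      exact ⟨S, hS1, hS2.trans (Finset.union_subset_union_right (Finset.erase_subset _ _)),
        hS3⟩

/-- LDEAD: if no reachable set satisfies `P`, Maker cannot win. -/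
theorem not_mwin_of_dead {n : ℕ} {b U M} (hn : n ≤ U.card)
    (h : ∀ S, M ⊆ S → S ⊆ M ∪ U → ¬ P S) : ¬ MWin P n b U M := fun hm => by
  obtain ⟨S, h1, h2, h3⟩ := mwin_exists_final hn hm
  exact h S h1 h2 h3

/-- L5' : from a Breaker win, the current Maker set fails `P`. -/
theorem not_P_of_not_mwin (hP : Mono P) :
    ∀ {n : ℕ} {b U M}, n = U.card → ¬ MWin P n b U M → ¬ P M := by
  intro n
  induction n with
  | zero => intro b U M _ hm; rw [mwin_zero] at hm; exact hm
  | succ n ih =>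
    intro b U M hn hm hPM
    cases b with
    | true =>
      have hU : U.Nonempty := by rw [← Finset.card_pos]; omega
      obtain ⟨e, he⟩ := hU
      rw [mwin_succ_true] at hm
      push_neg at hm
      have : ¬ P (insert e M) := by
        refine ih ?_ (hm e he)
        rw [Finset.card_erase_of_mem he]; omega
      exact this (hP (Finset.subset_insert e M) hPM)
    | false =>
      rw [mwin_succ_false] at hm
      push_neg at hm
      obtain ⟨e, he, hw⟩ := hm
      refine ih ?_ hw hPM
      rw [Finset.card_erase_of_mem he]; omega

/-- LTRIV: if `P` already holds, Maker trivially wins. -/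
theorem mwin_of_P (hP : Mono P) :
    ∀ {n : ℕ} {b U M}, n ≤ U.card → P M → MWin P n b U M := by
  intro n
  induction n with
  | zero => intro b U M _ h; exact mwin_zero.2 h
  | succ n ih =>
    intro b U M hn h
    cases b with
    | true =>
      have hU : U.Nonempty := by rw [← Finset.card_pos]; omega
      obtain ⟨e, he⟩ := hU
      refine ⟨e, he, ih ?_ (hP (Finset.subset_insert e M) h)⟩
      rw [Finset.card_erase_of_mem he]; omega
    | false =>
      intro e he
      refine ih ?_ h
      rw [Finset.card_erase_of_mem he]; omega


/-- L1: Maker domination. Throwing edges from the board into Maker's hand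
(and enlarging Maker's set) preserves a Maker win. -/
theorem mwin_dominate (hP : Mono P) :
    ∀ (n : ℕ) (b : Bool) (U U' M M' : Finset α), U'.card = n →
      U' ⊆ U → M ∪ (U \ U') ⊆ M' → MWin P U.card b U M → MWin P n b U' M' := by
  intro n
  induction n using Nat.strong_induction_on with
  | _ n ih =>
  intro b U U' M M' hcard hUU hMM hw
  rcases Nat.eq_zero_or_pos n with rfl | hpos
  · -- U' empty; conclusion is `P M'`
    have hU' : U' = ∅ := Finset.card_eq_zero.1 hcard
    subst hU'
    obtain ⟨S, hS1, hS2, hS3⟩ := mwin_exists_final le_rfl hw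
    have : S ⊆ M' := hS2.trans (by
      intro x hx
      rcases Finset.mem_union.1 hx with hx | hx
      · exact hMM (Finset.mem_union_left _ hx)
      · exact hMM (Finset.mem_union_right _ (by simp [hx])))
    exact mwin_zero.2 (hP this hS3)
  · have hU'ne : U'.Nonempty := by rw [← Finset.card_pos]; omega
    have hUne : U.Nonempty := hU'ne.mono hUU
    obtain ⟨m, hm⟩ : ∃ m, U.card = m + 1 := ⟨U.card - 1, by
      have := Finset.card_pos.2 hUne; omega⟩
    cases b with
    | true =>
      rw [hm, mwin_succ_true] at hw
      obtain ⟨f, hf, hwf⟩ := hw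
      have hfc : (U.erase f).card = m := by rw [Finset.card_erase_of_mem hf]; omega
      by_cases hf' : f ∈ U'
      · -- real Maker plays f as well
        obtain ⟨k, hk⟩ : ∃ k, n = k + 1 := ⟨n - 1, by omega⟩
        rw [hk, mwin_succ_true]
        refine ⟨f, hf', ?_⟩
        refine ih k (by omega) false (U.erase f) (U'.erase f) (insert f M) (insert f M')
          (by rw [Finset.card_erase_of_mem hf']; omega)
          (Finset.erase_subset_erase _ hUU) ?_ (by rwa [hfc])
        intro x hx
        rcases Finset.mem_union.1 hx with hx | hx
        · rcases Finset.mem_insert.1 hx with rfl | hx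
          · exact Finset.mem_insert_self _ _
          · exact Finset.mem_insert_of_mem (hMM (Finset.mem_union_left _ hx))
        · obtain ⟨hx1, hx2⟩ := Finset.mem_sdiff.1 hx
          have hxf : x ≠ f := (Finset.mem_erase.1 hx1).1
          refine Finset.mem_insert_of_mem (hMM (Finset.mem_union_right _ ?_))
          refine Finset.mem_sdiff.2 ⟨(Finset.erase_subset _ _) hx1, fun hxU' => ?_⟩
          exact hx2 (Finset.mem_erase.2 ⟨hxf, hxU'⟩)
      · -- f already effectively Maker's; real Maker plays any g ∈ U'
        obtain ⟨g, hg⟩ := hU'ne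
        obtain ⟨k, hk⟩ : ∃ k, n = k + 1 := ⟨n - 1, by omega⟩
        have hgU : g ∈ U := hUU hg
        have hgf : g ≠ f := fun h => hf' (h ▸ hg)
        rw [hk, mwin_succ_true]
        refine ⟨g, hg, ?_⟩
        refine ih k (by omega) false (U.erase f) (U'.erase g) (insert f M) (insert g M')
          (by rw [Finset.card_erase_of_mem hg]; omega) ?_ ?_ (by rwa [hfc])
        · intro x hx
          obtain ⟨hxg, hxU'⟩ := Finset.mem_erase.1 hx
          exact Finset.mem_erase.2 ⟨fun h => hf' (h ▸ hxU'), hUU hxU'⟩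
        · intro x hx
          rcases Finset.mem_union.1 hx with hx | hx
          · rcases Finset.mem_insert.1 hx with rfl | hx
            · exact Finset.mem_insert_of_mem (hMM (Finset.mem_union_right _
                (Finset.mem_sdiff.2 ⟨hf, hf'⟩)))
            · exact Finset.mem_insert_of_mem (hMM (Finset.mem_union_left _ hx))
          · obtain ⟨hx1, hx2⟩ := Finset.mem_sdiff.1 hx
            by_cases hxg : x = g
            · exact hxg ▸ Finset.mem_insert_self _ _
            · refine Finset.mem_insert_of_mem (hMM (Finset.mem_union_right _ ?_))
              refine Finset.mem_sdiff.2 ⟨(Finset.erase_subset _ _) hx1, fun hxU' => ?_⟩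
              exact hx2 (Finset.mem_erase.2 ⟨hxg, hxU'⟩)
    | false =>
      obtain ⟨k, hk⟩ : ∃ k, n = k + 1 := ⟨n - 1, by omega⟩
      rw [hk, mwin_succ_false]
      intro e he
      have heU : e ∈ U := hUU he
      rw [hm, mwin_succ_false] at hw
      have hwe := hw e heU
      refine ih k (by omega) true (U.erase e) (U'.erase e) M M'
        (by rw [Finset.card_erase_of_mem he]; omega)
        (Finset.erase_subset_erase _ hUU) ?_
        (by rwa [Finset.card_erase_of_mem heU, hm, Nat.add_sub_cancel])
      intro x hx
      rcases Finset.mem_union.1 hx with hx | hx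
      · exact hMM (Finset.mem_union_left _ hx)
      · obtain ⟨hx1, hx2⟩ := Finset.mem_sdiff.1 hx
        have hxe : x ≠ e := (Finset.mem_erase.1 hx1).1
        refine hMM (Finset.mem_union_right _ ?_)
        exact Finset.mem_sdiff.2 ⟨(Finset.erase_subset _ _) hx1, fun hxU' =>
          hx2 (Finset.mem_erase.2 ⟨hxe, hxU'⟩)⟩

/-- L1': Breaker domination. Removing edges from the board (Breaker pockets them)
and shrinking Maker's set preserves a Breaker win. -/
theorem not_mwin_dominate (hP : Mono P) :
    ∀ (n : ℕ) (b : Bool) (U U' M M' : Finset α), U'.card = n →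
      U' ⊆ U → M' ⊆ M → ¬ MWin P U.card b U M → ¬ MWin P n b U' M' := by
  intro n
  induction n using Nat.strong_induction_on with
  | _ n ih =>
  intro b U U' M M' hcard hUU hMM hw
  rcases Nat.eq_zero_or_pos n with rfl | hpos
  · have hU' : U' = ∅ := Finset.card_eq_zero.1 hcard
    subst hU'
    have hnP : ¬ P M := not_P_of_not_mwin hP rfl hw
    rw [mwin_zero]
    exact fun h => hnP (hP hMM h)
  · have hU'ne : U'.Nonempty := by rw [← Finset.card_pos]; omega
    have hUne : U.Nonempty := hU'ne.mono hUU
    obtain ⟨m, hm⟩ : ∃ m, U.card = m + 1 := ⟨U.card - 1, by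
      have := Finset.card_pos.2 hUne; omega⟩
    obtain ⟨k, hk⟩ : ∃ k, n = k + 1 := ⟨n - 1, by omega⟩
    cases b with
    | true =>
      rw [hk, mwin_succ_true]
      rintro ⟨e, he, hwe⟩
      have heU : e ∈ U := hUU he
      have hw' : ¬ MWin P m false (U.erase e) (insert e M) := by
        intro h
        exact hw (by rw [hm, mwin_succ_true]; exact ⟨e, heU, h⟩)
      refine ih k (by omega) false (U.erase e) (U'.erase e) (insert e M) (insert e M')
        (by rw [Finset.card_erase_of_mem he]; omega)
        (Finset.erase_subset_erase _ hUU)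
        (Finset.insert_subset_insert _ hMM) ?_ hwe
      rwa [Finset.card_erase_of_mem heU, hm, Nat.add_sub_cancel]
    | false =>
      rw [hm, mwin_succ_false] at hw
      push_neg at hw
      obtain ⟨f, hf, hwf⟩ := hw
      by_cases hf' : f ∈ U'
      · rw [hk, mwin_succ_false]
        intro hall
        have := hall f hf'
        exact ih k (by omega) true (U.erase f) (U'.erase f) M M'
          (by rw [Finset.card_erase_of_mem hf']; omega)
          (Finset.erase_subset_erase _ hUU) hMM
          (by rw [Finset.card_erase_of_mem hf, hm, Nat.add_sub_cancel]; exact hwf) this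
      · obtain ⟨g, hg⟩ := hU'ne
        rw [hk, mwin_succ_false]
        intro hall
        have hge := hall g hg
        refine ih k (by omega) true (U.erase f) (U'.erase g) M M'
          (by rw [Finset.card_erase_of_mem hg]; omega) ?_ hMM
          (by rw [Finset.card_erase_of_mem hf, hm, Nat.add_sub_cancel]; exact hwf) hge
        intro x hx
        obtain ⟨hxg, hxU'⟩ := Finset.mem_erase.1 hx
        exact Finset.mem_erase.2 ⟨fun h => hf' (h ▸ hxU'), hUU hxU'⟩

theorem erase_inter_comm' (s t : Finset α) (a : α) : (s.erase a) ∩ t = (s ∩ t).erase a := by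
  ext x; simp only [mem_inter, mem_erase]; tauto

theorem inter_eq_of_not_mem {s t : Finset α} {a : α} (h : a ∉ t) :
    (s.erase a) ∩ t = s ∩ t := by
  ext x; simp only [mem_inter, mem_erase]
  exact ⟨fun ⟨h1, h2⟩ => ⟨h1.2, h2⟩, fun ⟨h1, h2⟩ => ⟨⟨fun he => h (he ▸ h2), h1⟩, h2⟩⟩

/-- Maker sum lemma: Maker, playing second on a disjoint union `A ∪ B`, can use her
second-player strategy on `A` and ignore `B`. -/
theorem mwin_union (hP : Mono P) (hQ : Mono Q) (M₀ : Finset α)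
    (hQP : ∀ S, Q S → P (S ∪ M₀)) :
    ∀ (n : ℕ) (A B Mg Mr : Finset α), (A ∪ B).card = n → Disjoint A B →
      MWin Q A.card false A Mg → Mg ∪ M₀ ⊆ Mr →
      MWin P n false (A ∪ B) Mr := by
  intro n
  induction n using Nat.strong_induction_on with
  | _ n ih =>
  intro A B Mg Mr hn hAB hg hM
  have hPMr : Q Mg → P Mr := fun h => hP hM (hQP _ h)
  rcases Nat.eq_zero_or_pos n with rfl | hpos
  · have h0 : A ∪ B = ∅ := card_eq_zero.1 hn
    have hA : A = ∅ := by
      have := subset_union_left (s₁ := A) (s₂ := B); rw [h0] at this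
      exact subset_empty.1 this
    rw [mwin_zero]
    exact hPMr (by rw [hA] at hg; exact mwin_zero.1 hg)
  · obtain ⟨k, hk⟩ : ∃ k, n = k + 1 := ⟨n - 1, by omega⟩
    subst hk
    rw [mwin_succ_false]
    intro e he
    have hcarde : ((A ∪ B).erase e).card = k := by rw [card_erase_of_mem he]; omega
    rcases mem_union.1 he with heA | heB
    · -- Breaker moved in A
      obtain ⟨m, hm⟩ : ∃ m, A.card = m + 1 :=
        ⟨A.card - 1, by have := card_pos.2 ⟨e, heA⟩; omega⟩
      rw [hm, mwin_succ_false] at hg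
      have hge := hg e heA
      have hmc : (A.erase e).card = m := by rw [card_erase_of_mem heA]; omega
      rcases eq_or_ne m 0 with rfl | hm0
      · -- ghost finished: Q Mg holds
        have hQMg : Q Mg := mwin_zero.1 hge
        exact mwin_of_P hP (le_of_eq hcarde.symm) (hPMr hQMg)
      · obtain ⟨m', hm'⟩ : ∃ m', m = m' + 1 := ⟨m - 1, by omega⟩
        rw [hm', mwin_succ_true] at hge
        obtain ⟨f, hf, hgf⟩ := hge
        have hfA : f ∈ A := mem_of_mem_erase hf
        have hfe : f ≠ e := ne_of_mem_erase hf
        obtain ⟨k', hk'⟩ : ∃ k', k = k' + 1 := by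
          have h2 : A.card ≤ (A ∪ B).card := card_le_card subset_union_left
          exact ⟨k - 1, by omega⟩
        rw [hk', mwin_succ_true]
        refine ⟨f, mem_erase.2 ⟨hfe, mem_union_left _ hfA⟩, ?_⟩
        have hbd : ((A.erase e).erase f) ∪ B = ((A ∪ B).erase e).erase f := by
          rw [erase_union_distrib, erase_union_distrib,
            erase_eq_of_notMem (fun h => disjoint_left.1 hAB heA h),
            erase_eq_of_notMem (fun h => disjoint_left.1 hAB hfA h)]
        refine hbd ▸ ih k' (by omega) _ B (insert f Mg) (insert f Mr) ?_
          (disjoint_of_subset_left ((erase_subset _ _).trans (erase_subset _ _)) hAB)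
          ?_ ?_
        · rw [hbd, card_erase_of_mem (mem_erase.2 ⟨hfe, mem_union_left _ hfA⟩), hcarde]
          omega
        · have : ((A.erase e).erase f).card = m' := by
            rw [card_erase_of_mem hf, hmc]; omega
          rwa [this]
        · exact union_subset (insert_subset_insert _ (subset_union_left.trans hM))
            (fun x hx => mem_insert_of_mem (hM (mem_union_right _ hx)))
    · -- Breaker moved in B
      rcases (B.erase e).eq_empty_or_nonempty with hBe | ⟨g, hg'⟩
      · -- B = {e}
        rcases A.eq_empty_or_nonempty with hA | ⟨g, hgA⟩
        · -- everything is over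
          have : (A ∪ B).erase e = ∅ := by
            rw [hA, empty_union]
            ext x; simp only [mem_erase, notMem_empty, iff_false, not_and]
            intro hxe hxB
            have hx : x ∈ B.erase e := mem_erase.2 ⟨hxe, hxB⟩
            rw [hBe] at hx; exact absurd hx (notMem_empty x)
          rw [this] at hcarde ⊢
          simp only [card_empty] at hcarde
          subst hcarde
          rw [mwin_zero]
          exact hPMr (by rw [hA] at hg; exact mwin_zero.1 hg)
        · -- Maker takes a free extra move g in A
          obtain ⟨k', hk'⟩ : ∃ k', k = k' + 1 := by
            have h1 : 1 ≤ A.card := card_pos.2 ⟨g, hgA⟩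
            have h3 : insert e A ⊆ A ∪ B := by
              intro x hx; rcases mem_insert.1 hx with rfl | hx
              · exact mem_union_right _ heB
              · exact mem_union_left _ hx
            have hce : (insert e A).card = A.card + 1 :=
              card_insert_of_notMem (fun h => disjoint_left.1 hAB h heB)
            have h4 := card_le_card h3
            exact ⟨k - 1, by omega⟩
          rw [hk', mwin_succ_true]
          have hgne : g ≠ e := by rintro rfl; exact disjoint_left.1 hAB hgA heB
          refine ⟨g, mem_erase.2 ⟨hgne, mem_union_left _ hgA⟩, ?_⟩
          have hbd : (A.erase g) ∪ ∅ = ((A ∪ B).erase e).erase g := by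
            rw [union_empty, erase_union_distrib, erase_union_distrib, hBe,
              erase_eq_of_notMem (fun h => disjoint_left.1 hAB h heB),
              erase_eq_of_notMem (notMem_empty g), union_empty]
          have hghost : MWin Q (A.erase g).card false (A.erase g) (insert g Mg) := by
            refine mwin_dominate hQ _ false A _ Mg _ rfl (erase_subset _ _) ?_ hg
            intro x hx
            rcases mem_union.1 hx with hx | hx
            · exact mem_insert_of_mem hx
            · obtain ⟨h1, h2⟩ := mem_sdiff.1 hx
              have : x = g := by
                by_contra hne
                exact h2 (mem_erase.2 ⟨hne, h1⟩)
              exact this ▸ mem_insert_self _ _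
          refine hbd ▸ ih k' (by omega) _ ∅ (insert g Mg) (insert g Mr) ?_
            (disjoint_empty_right _) hghost ?_
          · rw [hbd, card_erase_of_mem (mem_erase.2 ⟨hgne, mem_union_left _ hgA⟩), hcarde]
            omega
          · exact union_subset (insert_subset_insert _ (subset_union_left.trans hM))
              (fun x hx => mem_insert_of_mem (hM (mem_union_right _ hx)))
      · -- Maker answers in B with g
        obtain ⟨k', hk'⟩ : ∃ k', k = k' + 1 := by
          have h1 : (B.erase e).card = B.card - 1 := card_erase_of_mem heB
          have h2 : 1 ≤ (B.erase e).card := card_pos.2 ⟨g, hg'⟩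
          have h3 : 1 ≤ B.card := card_pos.2 ⟨e, heB⟩
          have h4 := card_le_card (subset_union_right (s₁ := A) (s₂ := B))
          exact ⟨k - 1, by omega⟩
        rw [hk', mwin_succ_true]
        have hgB : g ∈ B := mem_of_mem_erase hg'
        refine ⟨g, mem_erase.2 ⟨ne_of_mem_erase hg', mem_union_right _ hgB⟩, ?_⟩
        have hbd : A ∪ ((B.erase e).erase g) = ((A ∪ B).erase e).erase g := by
          rw [erase_union_distrib, erase_union_distrib,
            erase_eq_of_notMem (fun h => disjoint_right.1 hAB heB h),
            erase_eq_of_notMem (fun h => disjoint_right.1 hAB hgB h)]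
        refine hbd ▸ ih k' (by omega) A _ Mg (insert g Mr) ?_
          (disjoint_of_subset_right ((erase_subset _ _).trans (erase_subset _ _)) hAB)
          hg (hM.trans (subset_insert _ _))
        rw [hbd, card_erase_of_mem (mem_erase.2 ⟨ne_of_mem_erase hg',
          mem_union_right _ hgB⟩), hcarde]
        omega


/-- A predicate that is insensitive to elements outside `R` only depends on the
intersection with `R`. -/
theorem q_inter {R : Finset α} {Q : Finset α → Prop}
    (hloc : ∀ M e, e ∉ R → (Q (insert e M) ↔ Q M)) (S : Finset α) :
    Q S ↔ Q (S ∩ R) := by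
  induction S using Finset.strongInduction with
  | _ S ih =>
    by_cases hsub : S ⊆ R
    · rw [inter_eq_left.2 hsub]
    · obtain ⟨e, heS, heR⟩ : ∃ e ∈ S, e ∉ R := by
        by_contra h; push_neg at h; exact hsub h
      have h1 : S = insert e (S.erase e) := (insert_erase heS).symm
      have h2 : Q S ↔ Q (S.erase e) := by
        conv_lhs => rw [h1]
        exact hloc _ e heR
      have h3 : (S.erase e) ∩ R = S ∩ R := by
        ext x; simp only [mem_inter, mem_erase]
        exact ⟨fun ⟨⟨_, h⟩, hr⟩ => ⟨h, hr⟩,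
          fun ⟨hs, hr⟩ => ⟨⟨fun hx => heR (hx ▸ hr), hs⟩, hr⟩⟩
      rw [h2, ih (S.erase e) (erase_ssubset heS), h3]

/-- Breaker sum lemma: if Breaker, as a responder, wins in each region separately,
he wins globally against any target covered by the regional targets. -/
theorem not_mwin_sum {ι : Type*} [DecidableEq ι] {I : Finset ι}
    {R : ι → Finset α} {Q : ι → Finset α → Prop}
    (hdisj : ∀ i ∈ I, ∀ j ∈ I, i ≠ j → Disjoint (R i) (R j))
    (hloc : ∀ i ∈ I, ∀ M e, e ∉ R i → (Q i (insert e M) ↔ Q i M))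
    (hQmono : ∀ i ∈ I, Mono (Q i)) :
    ∀ (n : ℕ) (W M : Finset α), W.card = n →
      (∀ e ∈ W, ∃ i ∈ I, e ∈ R i) →
      (∀ S, S ⊆ M ∪ W → P S → ∃ i ∈ I, Q i S) →
      (∀ i ∈ I, ¬ MWin (Q i) (W ∩ R i).card true (W ∩ R i) (M ∩ R i)) →
      ¬ MWin P n true W M := by
  intro n
  induction n using Nat.strong_induction_on with
  | _ n ih =>
  intro W M hn hreg hcov hghost hw
  rcases Nat.eq_zero_or_pos n with rfl | hpos
  · -- no moves left
    have hW : W = ∅ := card_eq_zero.1 hn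
    have hPM : P M := mwin_zero.1 hw
    obtain ⟨i, hi, hQi⟩ := hcov M subset_union_left hPM
    have := hghost i hi
    rw [hW, empty_inter, card_empty, mwin_zero] at this
    exact this ((q_inter (hloc i hi) M).1 hQi)
  · obtain ⟨k, hk⟩ : ∃ k, n = k + 1 := ⟨n - 1, by omega⟩
    subst hk
    rw [mwin_succ_true] at hw
    obtain ⟨e, heW, hwe⟩ := hw
    obtain ⟨j, hj, hej⟩ := hreg e heW
    have hejW : e ∈ W ∩ R j := mem_inter.2 ⟨heW, hej⟩
    obtain ⟨m, hm⟩ : ∃ m, (W ∩ R j).card = m + 1 :=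
      ⟨(W ∩ R j).card - 1, by have := card_pos.2 ⟨e, hejW⟩; omega⟩
    have hgj0 := hghost j hj
    rw [hm, mwin_succ_true] at hgj0
    push_neg at hgj0
    have hgj : ¬ MWin (Q j) m false ((W ∩ R j).erase e) (insert e (M ∩ R j)) := hgj0 e hejW
    have hins : insert e (M ∩ R j) = (insert e M) ∩ R j := (insert_inter_of_mem hej).symm
    -- facts: for i ≠ j, e ∉ R i
    have heRi : ∀ i ∈ I, i ≠ j → e ∉ R i := fun i hi hij h =>
      (disjoint_left.1 (hdisj i hi j hj hij) h) hej
    rcases ((W ∩ R j).erase e).eq_empty_or_nonempty with hBe | ⟨f, hf⟩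
    · -- region j is finished by Maker's move; Breaker answers anywhere
      have hm0 : m = 0 := by
        have := card_erase_of_mem hejW; rw [hBe] at this
        simp only [card_empty] at this; omega
      subst hm0
      rw [mwin_zero, hins] at hgj
      rcases (W.erase e).eq_empty_or_nonempty with hWe | ⟨f, hfW⟩
      · -- whole game over after Maker's move
        have hk0 : k = 0 := by
          have := card_erase_of_mem heW; rw [hWe] at this
          simp only [card_empty] at this; omega
        subst hk0
        rw [hWe, mwin_zero] at hwe
        obtain ⟨i, hi, hQi⟩ := hcov (insert e M)
          (insert_subset (mem_union_right _ heW) subset_union_left) hwe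
        have hQi' := (q_inter (hloc i hi) (insert e M)).1 hQi
        rcases eq_or_ne i j with rfl | hij
        · exact hgj hQi'
        · rw [insert_inter_of_notMem (heRi i hi hij)] at hQi'
          have hWRi : W ∩ R i = ∅ := by
            ext x
            simp only [mem_inter, notMem_empty, iff_false, not_and]
            intro hxW hxR
            rcases eq_or_ne x e with rfl | hxe
            · exact heRi i hi hij hxR
            · have : x ∈ W.erase e := mem_erase.2 ⟨hxe, hxW⟩
              rw [hWe] at this; exact absurd this (notMem_empty _)
          have := hghost i hi
          rw [hWRi, card_empty, mwin_zero] at this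
          exact this hQi'
      · -- Breaker answers with any f in W.erase e
        obtain ⟨k', hk'⟩ : ∃ k', k = k' + 1 :=
          ⟨k - 1, by have := card_pos.2 ⟨f, hfW⟩; have := card_erase_of_mem heW; omega⟩
        rw [hk', mwin_succ_false] at hwe
        have hwef := hwe f hfW
        obtain ⟨j', hj', hfj'⟩ := hreg f (mem_of_mem_erase hfW)
        have hfe : f ≠ e := ne_of_mem_erase hfW
        have hjj' : j' ≠ j := by
          rintro rfl
          have : f ∈ W ∩ R j' := mem_inter.2 ⟨mem_of_mem_erase hfW, hfj'⟩
          have : f ∈ (W ∩ R j').erase e := mem_erase.2 ⟨hfe, this⟩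
          rw [hBe] at this; exact absurd this (notMem_empty _)
        refine ih k' (by omega) ((W.erase e).erase f) (insert e M) ?_ ?_ ?_ ?_ hwef
        · rw [card_erase_of_mem (mem_erase.2 ⟨hfe, mem_of_mem_erase hfW⟩),
            card_erase_of_mem heW]; omega
        · exact fun x hx => hreg x (mem_of_mem_erase (mem_of_mem_erase hx))
        · intro S hS hPS
          refine hcov S (hS.trans ?_) hPS
          intro x hx
          rcases mem_union.1 hx with hx | hx
          · rcases mem_insert.1 hx with rfl | hx
            · exact mem_union_right _ heW
            · exact mem_union_left _ hx
          · exact mem_union_right _ (mem_of_mem_erase (mem_of_mem_erase hx))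
        · intro i hi
          rcases eq_or_ne i j with rfl | hij
          · -- region i finished
            have hWj : ((W.erase e).erase f) ∩ R i = ∅ := by
              rw [erase_inter_comm', erase_inter_comm', hBe]
              simp
            rw [hWj, card_empty, mwin_zero]
            exact hgj
          · have hMi : (insert e M) ∩ R i = M ∩ R i :=
              insert_inter_of_notMem (heRi i hi hij)
            rcases eq_or_ne i j' with rfl | hij'
            · -- Breaker pocketed f in region i
              have hWi : ((W.erase e).erase f) ∩ R i = (W ∩ R i).erase f := by
                rw [erase_inter_comm', inter_eq_of_not_mem (heRi i hi hij)]
              rw [hWi, hMi]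
              refine not_mwin_dominate (hQmono i hi) _ true (W ∩ R i) _ (M ∩ R i) _
                rfl (erase_subset _ _) Subset.rfl (hghost i hi)
            · have hWi : ((W.erase e).erase f) ∩ R i = W ∩ R i := by
                rw [inter_eq_of_not_mem (fun h => (disjoint_left.1
                  (hdisj j' hj' i hi (fun hh => hij' hh.symm)) hfj') h),
                  inter_eq_of_not_mem (heRi i hi hij)]
              rw [hWi, hMi]
              exact hghost i hi
    · -- Breaker answers f inside region j, given by his regional strategy
      obtain ⟨m', hm'⟩ : ∃ m', m = m' + 1 :=
        ⟨m - 1, by have := card_pos.2 ⟨f, hf⟩; have := card_erase_of_mem hejW; omega⟩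
      rw [hm', mwin_succ_false] at hgj
      push_neg at hgj
      obtain ⟨f', hf', hgf⟩ := hgj
      have hf'W : f' ∈ W.erase e := by
        obtain ⟨h1, h2⟩ := mem_erase.1 hf'
        exact mem_erase.2 ⟨h1, (mem_inter.1 h2).1⟩
      obtain ⟨k', hk'⟩ : ∃ k', k = k' + 1 :=
        ⟨k - 1, by have := card_pos.2 ⟨f', hf'W⟩; have := card_erase_of_mem heW; omega⟩
      rw [hk', mwin_succ_false] at hwe
      have hwef := hwe f' hf'W
      have hf'e : f' ≠ e := ne_of_mem_erase hf'W
      have hf'Rj : f' ∈ R j := (mem_inter.1 (mem_of_mem_erase hf')).2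
      refine ih k' (by omega) ((W.erase e).erase f') (insert e M) ?_ ?_ ?_ ?_ hwef
      · rw [card_erase_of_mem (mem_erase.2 ⟨hf'e, mem_of_mem_erase hf'W⟩),
          card_erase_of_mem heW]; omega
      · exact fun x hx => hreg x (mem_of_mem_erase (mem_of_mem_erase hx))
      · intro S hS hPS
        refine hcov S (hS.trans ?_) hPS
        intro x hx
        rcases mem_union.1 hx with hx | hx
        · rcases mem_insert.1 hx with rfl | hx
          · exact mem_union_right _ heW
          · exact mem_union_left _ hx
        · exact mem_union_right _ (mem_of_mem_erase (mem_of_mem_erase hx))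
      · intro i hi
        rcases eq_or_ne i j with rfl | hij
        · have hWi : ((W.erase e).erase f') ∩ R i = ((W ∩ R i).erase e).erase f' := by
            rw [erase_inter_comm', erase_inter_comm']
          rw [hWi, ← hins, card_erase_of_mem (mem_erase.2 ⟨hf'e, mem_of_mem_erase hf'⟩),
            card_erase_of_mem hejW, hm]
          have : m + 1 - 1 - 1 = m' := by omega
          rw [this]
          exact hgf
        · have hMi : (insert e M) ∩ R i = M ∩ R i :=
            insert_inter_of_notMem (heRi i hi hij)
          have hWi : ((W.erase e).erase f') ∩ R i = W ∩ R i := by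
            rw [inter_eq_of_not_mem (fun h => (disjoint_left.1
                (hdisj j hj i hi (fun hh => hij hh.symm)) hf'Rj) h),
              inter_eq_of_not_mem (heRi i hi hij)]
          rw [hWi, hMi]
          exact hghost i hi


theorem mwin_zero' {P : Finset α → Prop} {b U M} : MWin P 0 b U M ↔ P M := by
  cases b <;> exact Iff.rfl

/-- Transport of the game along an injection of boards. -/
theorem mwin_image {β : Type*} [DecidableEq β] {f : α → β} (hf : Function.Injective f)
    {P : Finset α → Prop} {P' : Finset β → Prop} (hPP : ∀ S, P S ↔ P' (S.image f)) :
    ∀ (n : ℕ) (b : Bool) (U M : Finset α),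
      MWin P n b U M ↔ MWin P' n b (U.image f) (M.image f) := by
  intro n
  induction n with
  | zero => intro b U M; rw [mwin_zero', mwin_zero']; exact hPP M
  | succ n ih =>
    intro b U M
    cases b with
    | true =>
      show (∃ e ∈ U, _) ↔ (∃ e ∈ U.image f, _)
      constructor
      · rintro ⟨e, he, hw⟩
        refine ⟨f e, Finset.mem_image_of_mem f he, ?_⟩
        have := (ih false (U.erase e) (insert e M)).1 hw
        rwa [Finset.image_erase hf, Finset.image_insert] at this
      · rintro ⟨e', he', hw⟩
        obtain ⟨e, he, rfl⟩ := Finset.mem_image.1 he'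
        refine ⟨e, he, (ih false (U.erase e) (insert e M)).2 ?_⟩
        rwa [Finset.image_erase hf, Finset.image_insert]
    | false =>
      show (∀ e ∈ U, _) ↔ (∀ e ∈ U.image f, _)
      constructor
      · rintro hw e' he'
        obtain ⟨e, he, rfl⟩ := Finset.mem_image.1 he'
        have := (ih true (U.erase e) M).1 (hw e he)
        rwa [Finset.image_erase hf] at this
      · rintro hw e he
        refine (ih true (U.erase e) M).2 ?_
        have := hw (f e) (Finset.mem_image_of_mem f he)
        rwa [← Finset.image_erase hf] at this

variable {V : Type*} [Fintype V] [DecidableEq V]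

/-- The edges of the branch of `x`, as edges of the ambient graph. -/
noncomputable def EXf (T : SimpleGraph V) (r x : V) : Finset (Sym2 V) :=
  ((T.induce (childVerts T r x)).edgeSet.toFinite.toFinset).image (Sym2.map Subtype.val)

/-- The region of the child `x`: the edge `rx` together with the branch edges. -/
noncomputable def RGf (T : SimpleGraph V) (r x : V) : Finset (Sym2 V) :=
  insert s(r, x) (EXf T r x)

/-- `M` contains a path of length at least `k` starting at `x` and avoiding `r`. -/
def pathQ (T : SimpleGraph V) (r x : V) (k : ℕ) (M : Finset (Sym2 V)) : Prop :=
  ∃ (v : V) (q : T.Walk x v), q.IsPath ∧ r ∉ q.support ∧ k ≤ q.length ∧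
    ∀ e ∈ q.edges, e ∈ M

/-- Regional target: `rx` plus a path of length `≥ k` in the branch. -/
def RQ (T : SimpleGraph V) (r x : V) (k : ℕ) (M : Finset (Sym2 V)) : Prop :=
  s(r, x) ∈ M ∧ pathQ T r x k M

variable {T : SimpleGraph V} (hT : T.IsTree) {r x y : V}

set_option linter.unusedSectionVars false

theorem mem_EXf {e : Sym2 V} :
    e ∈ EXf T r x ↔ e ∈ T.edgeSet ∧ ∀ v ∈ e, v ∈ childVerts T r x := by
  constructor
  · intro he
    rw [EXf, Finset.mem_image] at he
    obtain ⟨e', he', rfl⟩ := he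
    rw [Set.Finite.mem_toFinset] at he'
    revert he'
    refine Sym2.ind (fun a b => ?_) e'
    intro hab
    rw [mem_edgeSet] at hab
    constructor
    · exact hab
    · intro v hv
      rw [Sym2.map_pair_eq, Sym2.mem_iff] at hv
      rcases hv with rfl | rfl
      · exact a.2
      · exact b.2
  · refine Sym2.ind (fun u w => ?_) e
    rintro ⟨he, hcv⟩
    rw [mem_edgeSet] at he
    have hu : u ∈ childVerts T r x := hcv u (Sym2.mem_mk_left u w)
    have hw : w ∈ childVerts T r x := hcv w (Sym2.mem_mk_right u w)
    rw [EXf, Finset.mem_image]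
    refine ⟨s((⟨u, hu⟩ : childVerts T r x), ⟨w, hw⟩), ?_, by rw [Sym2.map_pair_eq]⟩
    rw [Set.Finite.mem_toFinset, mem_edgeSet]
    exact he

theorem EXf_subset_edgeSet : (EXf T r x : Set (Sym2 V)) ⊆ T.edgeSet :=
  fun e he => (mem_EXf.1 he).1

include hT

theorem walk_support_cv' {v : V} (q : T.Walk x v) (hr : r ∉ q.support) :
    ∀ w ∈ q.support, w ∈ childVerts T r x := by
  intro w hw
  have hredge : ∀ e ∈ (q.takeUntil w hw).edges, e ∉ ({s(r, x)} : Set (Sym2 V)) := by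
    intro e he hmem
    rw [Set.mem_singleton_iff] at hmem
    subst hmem
    exact hr ((q.support_takeUntil_subset hw)
      ((q.takeUntil w hw).fst_mem_support_of_mem_edges he))
  exact ⟨(q.takeUntil w hw).toDeleteEdges _ hredge⟩

/-- From membership in `childVerts` produce a path avoiding `r` (assuming `rx` is an edge). -/
theorem cv_exists_path' (hx : T.Adj r x) {v : V} (hv : v ∈ childVerts T r x) :
    ∃ q : T.Walk x v, q.IsPath ∧ r ∉ q.support := by
  obtain ⟨w⟩ := hv
  let p := w.toPath
  have hpe : ∀ e ∈ (p : (T.deleteEdges {s(r,x)}).Walk x v).edges, e ∈ T.edgeSet := by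
    intro e he
    have := Walk.edges_subset_edgeSet _ he
    rw [edgeSet_deleteEdges] at this
    exact this.1
  refine ⟨(p : (T.deleteEdges {s(r,x)}).Walk x v).transfer T hpe, p.2.transfer _, ?_⟩
  intro hrs
  rw [Walk.support_transfer] at hrs
  -- build two distinct paths from x to r
  have hne : s(r, x) ∉ (p : (T.deleteEdges {s(r,x)}).Walk x v).edges := by
    intro he
    have := Walk.edges_subset_edgeSet _ he
    rw [edgeSet_deleteEdges] at this
    exact this.2 rfl
  set q := (p : (T.deleteEdges {s(r,x)}).Walk x v).transfer T hpe with hqdef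
  have hq : q.IsPath := p.2.transfer _
  have hrq : r ∈ q.support := by rwa [hqdef, Walk.support_transfer]
  have hp1 : (q.takeUntil r hrq).IsPath := hq.takeUntil _
  have hp2 : (Walk.cons hx.symm Walk.nil : T.Walk x r).IsPath := by
    rw [Walk.cons_isPath_iff]
    exact ⟨Walk.IsPath.nil, by simp [hx.ne']⟩
  have := (hT.existsUnique_path x r).unique hp1 hp2
  have hmem : s(r, x) ∈ (q.takeUntil r hrq).edges := by
    rw [this]; simp [Sym2.eq_swap]
  have hmm : s(r, x) ∈ q.edges := q.edges_takeUntil_subset _ hmem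
  rw [hqdef, Walk.edges_transfer] at hmm
  exact hne hmm

theorem root_not_mem_cv' (hx : T.Adj r x) : r ∉ childVerts T r x := by
  intro hv
  obtain ⟨q, hq, hrs⟩ := cv_exists_path' hT hx hv
  exact hrs q.end_mem_support


theorem cv_disjoint' (hx : T.Adj r x) (hy : T.Adj r y) (hxy : x ≠ y) {v : V}
    (h1 : v ∈ childVerts T r x) (h2 : v ∈ childVerts T r y) : False := by
  obtain ⟨qx, hqx, hrx⟩ := cv_exists_path' hT hx h1
  obtain ⟨qy, hqy, hry⟩ := cv_exists_path' hT hy h2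
  have hpx : (Walk.cons hx qx).IsPath := by rw [Walk.cons_isPath_iff]; exact ⟨hqx, hrx⟩
  have hpy : (Walk.cons hy qy).IsPath := by rw [Walk.cons_isPath_iff]; exact ⟨hqy, hry⟩
  have heq := (hT.existsUnique_path r v).unique hpx hpy
  have := congrArg Walk.support heq
  rw [Walk.support_cons, Walk.support_cons, qx.support_eq_cons, qy.support_eq_cons] at this
  simp only [List.cons.injEq] at this
  exact hxy this.2.1

theorem exists_cv' (hv : v ≠ r) : ∃ x, T.Adj r x ∧ v ∈ childVerts T r x := by
  obtain ⟨w⟩ := hT.isConnected.preconnected r v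
  obtain ⟨q, hq⟩ : ∃ q : T.Walk r v, q.IsPath := ⟨w.toPath, w.toPath.2⟩
  obtain ⟨x, h, q', rfl⟩ := Walk.exists_eq_cons_of_ne (Ne.symm hv) q
  rw [Walk.cons_isPath_iff] at hq
  exact ⟨x, h, walk_support_cv' hT q' hq.2 v q'.end_mem_support⟩

omit hT in
theorem sym2_eq_of_rx (hx : T.Adj r x) (hy : T.Adj r y) (h : s(r, x) = s(r, y)) : x = y := by
  rw [Sym2.eq_iff] at h
  rcases h with ⟨-, h⟩ | ⟨h1, h2⟩
  · exact h
  · exact h2.trans h1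

theorem rx_not_mem_EXf (hx : T.Adj r x) (hy : T.Adj r y) : s(r, x) ∉ EXf T r y := by
  intro h
  exact root_not_mem_cv' hT hy ((mem_EXf.1 h).2 r (Sym2.mem_mk_left r x))

theorem RGf_disjoint (hx : T.Adj r x) (hy : T.Adj r y) (hxy : x ≠ y) :
    Disjoint (RGf T r x) (RGf T r y) := by
  rw [Finset.disjoint_left]
  intro e hex hey
  rw [RGf, Finset.mem_insert] at hex hey
  rcases hex with rfl | hex
  · rcases hey with h | hey
    · exact hxy (sym2_eq_of_rx hx hy h)
    · exact rx_not_mem_EXf hT hx hy hey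
  · rcases hey with rfl | hey
    · exact rx_not_mem_EXf hT hy hx hex
    · obtain ⟨he1, hcx⟩ := mem_EXf.1 hex
      obtain ⟨-, hcy⟩ := mem_EXf.1 hey
      revert he1 hcx hcy
      refine Sym2.ind (fun u w => ?_) e
      intro he1 hcx hcy
      exact cv_disjoint' hT hx hy hxy (hcx u (Sym2.mem_mk_left u w))
        (hcy u (Sym2.mem_mk_left u w))

theorem edge_decomp {e : Sym2 V} (he : e ∈ T.edgeSet) :
    ∃ x, T.Adj r x ∧ e ∈ RGf T r x := by
  revert he
  refine Sym2.ind (fun u w => ?_) e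
  intro he
  rw [mem_edgeSet] at he
  rcases eq_or_ne u r with rfl | hur
  · exact ⟨w, he, Finset.mem_insert_self _ _⟩
  · rcases eq_or_ne w r with rfl | hwr
    · exact ⟨u, he.symm, by rw [Sym2.eq_swap]; exact Finset.mem_insert_self _ _⟩
    · obtain ⟨z, hz, hu⟩ := exists_cv' hT hur
      have hadj : (T.deleteEdges {s(r, z)}).Adj u w := by
        rw [deleteEdges_adj]
        refine ⟨he, ?_⟩
        rw [Set.mem_singleton_iff, Sym2.eq_iff]
        rintro (⟨rfl, -⟩ | ⟨-, rfl⟩)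
        · exact hur rfl
        · exact hwr rfl
      have hw : w ∈ childVerts T r z := hu.trans hadj.reachable
      refine ⟨z, hz, Finset.mem_insert_of_mem (mem_EXf.2 ⟨(T.mem_edgeSet).2 he, ?_⟩)⟩
      intro v hv
      rw [Sym2.mem_iff] at hv
      rcases hv with rfl | rfl
      · exact hu
      · exact hw

omit hT in
theorem pathQ_mono {k : ℕ} : Mono (pathQ T r x k) :=
  fun S S' hss ⟨v, q, h1, h2, h3, h4⟩ => ⟨v, q, h1, h2, h3, fun e he => hss (h4 e he)⟩

omit hT in
theorem RQ_mono {k : ℕ} : Mono (RQ T r x k) :=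
  fun S S' hss ⟨h1, h2⟩ => ⟨hss h1, pathQ_mono hss h2⟩

theorem pathQ_edges (hx : T.Adj r x) {k M} (h : pathQ T r x k M) :
    ∃ (v : V) (q : T.Walk x v), q.IsPath ∧ r ∉ q.support ∧ k ≤ q.length ∧
      (∀ e ∈ q.edges, e ∈ M) ∧ ∀ e ∈ q.edges, e ∈ EXf T r x := by
  obtain ⟨v, q, h1, h2, h3, h4⟩ := h
  refine ⟨v, q, h1, h2, h3, h4, fun e he => ?_⟩
  have hcv := walk_support_cv' hT q h2
  have hes : e ∈ T.edgeSet := q.edges_subset_edgeSet he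
  refine mem_EXf.2 ⟨hes, ?_⟩
  intro w hw
  revert hw he
  refine Sym2.ind (fun a b => ?_) e
  intro he hw
  rw [Sym2.mem_iff] at hw
  rcases hw with rfl | rfl
  · exact hcv w (q.fst_mem_support_of_mem_edges he)
  · exact hcv w (q.snd_mem_support_of_mem_edges he)

theorem RQ_local (hx : T.Adj r x) {k : ℕ} (M : Finset (Sym2 V)) (e : Sym2 V)
    (he : e ∉ RGf T r x) : RQ T r x k (insert e M) ↔ RQ T r x k M := by
  constructor
  · rintro ⟨h1, h2⟩
    obtain ⟨v, q, hq1, hq2, hq3, hq4, hq5⟩ := pathQ_edges hT hx h2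
    refine ⟨?_, v, q, hq1, hq2, hq3, fun e' he' => ?_⟩
    · rcases Finset.mem_insert.1 h1 with h | h
      · exact absurd (h ▸ Finset.mem_insert_self _ _ : e ∈ RGf T r x) he
      · exact h
    · rcases Finset.mem_insert.1 (hq4 e' he') with rfl | h
      · exact absurd (Finset.mem_insert_of_mem (hq5 e' he')) he
      · exact h
  · exact fun h => RQ_mono (Finset.subset_insert e M) h

omit hT in
theorem lift_walk {s : Set V} :
    ∀ {a b : V} (q : T.Walk a b) (ha : a ∈ s) (hb : b ∈ s),
      (∀ w ∈ q.support, w ∈ s) →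
      ∃ p : (T.induce s).Walk ⟨a, ha⟩ ⟨b, hb⟩,
        p.map (SimpleGraph.Embedding.induce s).toHom = q := by
  intro a b q
  induction q with
  | nil => intro ha hb _; exact ⟨Walk.nil, rfl⟩
  | @cons a c b h q ih =>
    intro ha hb hsup
    have hc : c ∈ s := hsup c (by
      rw [Walk.support_cons]
      exact List.mem_cons_of_mem _ q.start_mem_support)
    obtain ⟨p, hp⟩ := ih hc hb (fun w hw => hsup w (by
      rw [Walk.support_cons]
      exact List.mem_cons_of_mem _ hw))
    have hadj : (T.induce s).Adj ⟨a, ha⟩ ⟨c, hc⟩ := h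
    refine ⟨Walk.cons hadj p, ?_⟩
    rw [Walk.map_cons, hp]
    rfl

omit hT in
theorem induce_val_injective {s : Set V} :
    Function.Injective (SimpleGraph.Embedding.induce (G := T) s).toHom :=
  fun a b h => Subtype.val_injective h

/-- Correspondence between the rooted-path target in the induced branch
and the intrinsic branch target in `T`. -/
theorem hasPath_iff (hx : T.Adj r x) (k : ℕ) (S : Finset (Sym2 (childVerts T r x))) :
    hasPathFrom (T.induce (childVerts T r x)) ⟨x, SimpleGraph.Reachable.refl x⟩ k S ↔
      pathQ T r x k (S.image (Sym2.map Subtype.val)) := by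
  constructor
  · rintro ⟨v, p, hp, hl, he⟩
    refine ⟨v.1, p.map (SimpleGraph.Embedding.induce _).toHom,
      p.map_isPath_of_injective induce_val_injective hp, ?_, ?_, ?_⟩
    · intro hr
      replace hr := Eq.mp (congrArg (r ∈ ·) (Walk.support_map _ p)) hr
      obtain ⟨w, hw, hwr⟩ := List.mem_map.1 hr
      have hw2 : (SimpleGraph.Embedding.induce (G := T) (childVerts T r x)).toHom w
          ∈ childVerts T r x := w.2
      rw [hwr] at hw2
      exact root_not_mem_cv' hT hx hw2
    · exact hl.trans_eq (Walk.length_map _ p).symm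
    · intro e hee
      replace hee := Eq.mp (congrArg (e ∈ ·) (Walk.edges_map _ p)) hee
      obtain ⟨e', he', rfl⟩ := List.mem_map.1 hee
      exact Finset.mem_image_of_mem _ (he e' he')
  · rintro ⟨v, q, hq, hr, hl, he⟩
    have hsup := walk_support_cv' hT q hr
    have hxmem : x ∈ childVerts T r x :=
      (SimpleGraph.Reachable.refl x : (T.deleteEdges {s(r,x)}).Reachable x x)
    obtain ⟨p, hp⟩ := lift_walk q hxmem (hsup v q.end_mem_support) hsup
    refine ⟨⟨v, hsup v q.end_mem_support⟩, p, ?_, ?_, ?_⟩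
    · rw [← hp] at hq
      exact hq.of_map
    · have h2 : (p.map (SimpleGraph.Embedding.induce _).toHom).length = p.length :=
        Walk.length_map _ _
      rw [hp] at h2
      exact hl.trans_eq h2
    · intro e' he'
      have hmem : Sym2.map Subtype.val e' ∈
          (p.map (SimpleGraph.Embedding.induce (childVerts T r x)).toHom).edges := by
        rw [Walk.edges_map]
        exact List.mem_map.2 ⟨e', he', rfl⟩
      rw [hp] at hmem
      have := he _ hmem
      rw [Finset.mem_image] at this
      obtain ⟨e'', he'', heq⟩ := this
      rwa [← Sym2.map.injective Subtype.val_injective heq]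


end MBGame


namespace MBGame

section Values

variable {W : Type*} [Fintype W] [DecidableEq W] (G : SimpleGraph W) (r' : W)

omit [Fintype W] in
theorem hasPathFrom_monoM {j : ℕ} : Mono (hasPathFrom G r' j) :=
  fun S S' hss ⟨v, p, h1, h2, h3⟩ => ⟨v, p, h1, h2, fun e he => hss (h3 e he)⟩

omit [Fintype W] in
theorem hasPathFrom_monoJ {j j' : ℕ} (h : j ≤ j') (S : Finset (Sym2 W)) :
    hasPathFrom G r' j' S → hasPathFrom G r' j S :=
  fun ⟨v, p, h1, h2, h3⟩ => ⟨v, p, h1, le_trans h h2, h3⟩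

theorem zero_mem_S (b : Bool) :
    MWin (hasPathFrom G r' 0) G.edgeSet.toFinite.toFinset.card b
      G.edgeSet.toFinite.toFinset ∅ := by
  refine mwin_of_P (hasPathFrom_monoM G r') le_rfl ?_
  exact ⟨r', Walk.nil, Walk.IsPath.nil, Nat.zero_le _, by simp⟩

theorem S_bdd (b : Bool) (j : ℕ)
    (h : MWin (hasPathFrom G r' j) G.edgeSet.toFinite.toFinset.card b
      G.edgeSet.toFinite.toFinset ∅) : j ≤ Fintype.card W := by
  obtain ⟨S, -, -, v, p, h1, h2, -⟩ := mwin_exists_final le_rfl h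
  exact le_trans h2 (le_of_lt h1.length_lt)

theorem game_value (b : Bool) (k : ℕ)
    (h1 : MWin (hasPathFrom G r' k) G.edgeSet.toFinite.toFinset.card b
      G.edgeSet.toFinite.toFinset ∅)
    (h2 : ¬ MWin (hasPathFrom G r' (k+1)) G.edgeSet.toFinite.toFinset.card b
      G.edgeSet.toFinite.toFinset ∅) :
    sSup {j | MWin (hasPathFrom G r' j) G.edgeSet.toFinite.toFinset.card b
      G.edgeSet.toFinite.toFinset ∅} = k := by
  have hbdd : BddAbove {j | MWin (hasPathFrom G r' j) G.edgeSet.toFinite.toFinset.card b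
      G.edgeSet.toFinite.toFinset ∅} := ⟨Fintype.card W, fun j hj => S_bdd G r' b j hj⟩
  refine le_antisymm (csSup_le ⟨0, zero_mem_S G r' b⟩ ?_) (le_csSup hbdd h1)
  intro j hj
  by_contra hlt
  push_neg at hlt
  exact h2 (mwin_mono_P (hasPathFrom_monoJ G r' (by omega : k + 1 ≤ j)) hj)

theorem game_value_mem (b : Bool) :
    MWin (hasPathFrom G r' (sSup {j | MWin (hasPathFrom G r' j)
        G.edgeSet.toFinite.toFinset.card b G.edgeSet.toFinite.toFinset ∅}))
      G.edgeSet.toFinite.toFinset.card b G.edgeSet.toFinite.toFinset ∅ := by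
  have hbdd : BddAbove {j | MWin (hasPathFrom G r' j) G.edgeSet.toFinite.toFinset.card b
      G.edgeSet.toFinite.toFinset ∅} := ⟨Fintype.card W, fun j hj => S_bdd G r' b j hj⟩
  exact Nat.sSup_mem ⟨0, zero_mem_S G r' b⟩ hbdd

theorem game_value_succ (b : Bool) :
    ¬ MWin (hasPathFrom G r' (sSup {j | MWin (hasPathFrom G r' j)
        G.edgeSet.toFinite.toFinset.card b G.edgeSet.toFinite.toFinset ∅} + 1))
      G.edgeSet.toFinite.toFinset.card b G.edgeSet.toFinite.toFinset ∅ := by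
  intro h
  have hbdd : BddAbove {j | MWin (hasPathFrom G r' j) G.edgeSet.toFinite.toFinset.card b
      G.edgeSet.toFinite.toFinset ∅} := ⟨Fintype.card W, fun j hj => S_bdd G r' b j hj⟩
  have := le_csSup hbdd h
  omega

end Values

section Assemble

variable {V : Type*} [Fintype V] [DecidableEq V]
variable {T : SimpleGraph V} [DecidableRel T.Adj] (hT : T.IsTree) {r x y : V}

set_option linter.unusedSectionVars false
set_option linter.unusedVariables false

include hT

theorem subtree_transport (hx : T.Adj r x) (k : ℕ) (b : Bool) :
    MWin (hasPathFrom (T.induce (childVerts T r x)) ⟨x, SimpleGraph.Reachable.refl x⟩ k)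
      (T.induce (childVerts T r x)).edgeSet.toFinite.toFinset.card b
      (T.induce (childVerts T r x)).edgeSet.toFinite.toFinset ∅ ↔
    MWin (pathQ T r x k) (EXf T r x).card b (EXf T r x) ∅ := by
  have hinj : Function.Injective (Sym2.map (Subtype.val : childVerts T r x → V)) :=
    Sym2.map.injective Subtype.val_injective
  have := mwin_image hinj (P' := pathQ T r x k) (hasPath_iff hT hx k)
    (T.induce (childVerts T r x)).edgeSet.toFinite.toFinset.card b
    (T.induce (childVerts T r x)).edgeSet.toFinite.toFinset ∅
  rw [Finset.image_empty] at this
  simp only [EXf]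
  rw [Finset.card_image_of_injective _ hinj]
  exact this

theorem subtree_beta (hx : T.Adj r x) :
    MWin (pathQ T r x (lB (T.induce (childVerts T r x)) ⟨x, SimpleGraph.Reachable.refl x⟩))
      (EXf T r x).card false (EXf T r x) ∅ := by
  rw [← subtree_transport hT hx _ false]
  have : Fintype (childVerts T r x) := Fintype.ofFinite _
  exact game_value_mem _ _ false

theorem subtree_alpha (hx : T.Adj r x) :
    ¬ MWin (pathQ T r x
        (lB (T.induce (childVerts T r x)) ⟨x, SimpleGraph.Reachable.refl x⟩ + 1))
      (EXf T r x).card false (EXf T r x) ∅ := by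
  rw [← subtree_transport hT hx _ false]
  have : Fintype (childVerts T r x) := Fintype.ofFinite _
  exact game_value_succ _ _ false

theorem rx_mem_E (hx : T.Adj r x) : s(r, x) ∈ T.edgeSet.toFinite.toFinset := by
  rw [Set.Finite.mem_toFinset]; exact hx

theorem EXf_subset_E : EXf T r x ⊆ T.edgeSet.toFinite.toFinset := by
  intro e he
  rw [Set.Finite.mem_toFinset]
  exact (mem_EXf.1 he).1

/-- Decomposing a nontrivial path from the root. -/
theorem hasPath_decomp {j : ℕ} {S : Finset (Sym2 V)} (h : hasPathFrom T r (j+1) S) :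
    ∃ y, T.Adj r y ∧ RQ T r y j S := by
  obtain ⟨v, p, hp, hl, he⟩ := h
  cases p with
  | nil => simp at hl
  | @cons _ y _ hadj q =>
    rw [Walk.cons_isPath_iff] at hp
    have hfirst : s(r, y) ∈ (Walk.cons hadj q).edges := by
      rw [Walk.edges_cons]; exact List.mem_cons_self
    have hrest : ∀ e' ∈ q.edges, e' ∈ S := by
      intro e' he'
      refine he e' ?_
      rw [Walk.edges_cons]
      exact List.mem_cons_of_mem _ he'
    refine ⟨y, hadj, he s(r, y) hfirst, v, q, hp.1, hp.2, ?_, hrest⟩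
    rw [Walk.length_cons] at hl
    omega

/-- Composing the root edge with a branch path. -/
theorem pathQ_cons (hx : T.Adj r x) {k k' : ℕ} (hkk : k' ≤ k) {S : Finset (Sym2 V)}
    (h : pathQ T r x k S) : hasPathFrom T r (1 + k') (S ∪ {s(r, x)}) := by
  obtain ⟨v, q, h1, h2, h3, h4⟩ := h
  refine ⟨v, Walk.cons hx q, ?_, ?_, ?_⟩
  · rw [Walk.cons_isPath_iff]; exact ⟨h1, h2⟩
  · rw [Walk.length_cons]; omega
  · intro e he
    rw [Walk.edges_cons] at he
    rcases List.mem_cons.1 he with rfl | he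
    · exact Finset.mem_union_right _ (Finset.mem_singleton_self _)
    · exact Finset.mem_union_left _ (h4 e he)

/-- The regional Breaker strategy: Breaker as responder prevents `RQ x (t+1)` on the
region of `x`, given his first-player strategy on the branch. -/
theorem not_mwin_region (hx : T.Adj r x) (t : ℕ)
    (ht : ¬ MWin (pathQ T r x (t+1)) (EXf T r x).card false (EXf T r x) ∅) :
    ¬ MWin (RQ T r x (t+1)) (RGf T r x).card true (RGf T r x) ∅ := by
  have hrE : s(r, x) ∉ EXf T r x := rx_not_mem_EXf hT hx hx
  have hcard : (RGf T r x).card = (EXf T r x).card + 1 := by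
    rw [RGf, Finset.card_insert_of_notMem hrE]
  intro hw
  rw [hcard, mwin_succ_true] at hw
  obtain ⟨e, he, hwe⟩ := hw
  rw [RGf, Finset.mem_insert] at he
  rcases he with rfl | heX
  · -- Maker claims the root edge; reduce to the branch game
    rw [show (RGf T r x).erase s(r,x) = EXf T r x by
      rw [RGf, Finset.erase_insert hrE]] at hwe
    have hshift : MWin (fun S => RQ T r x (t+1) (S ∪ {s(r,x)}))
        (EXf T r x).card false (EXf T r x) ∅ := by
      refine mwin_shift.1 ?_
      rwa [Finset.empty_union, show ({s(r,x)} : Finset (Sym2 V)) = insert s(r,x) ∅ from rfl]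
    refine ht (mwin_mono_P ?_ hshift)
    intro S hS
    obtain ⟨-, v, q, h1, h2, h3, h4⟩ := hS
    refine ⟨v, q, h1, h2, h3, fun e' he' => ?_⟩
    rcases Finset.mem_union.1 (h4 e' he') with h | h
    · exact h
    · exfalso
      rw [Finset.mem_singleton] at h
      subst h
      exact h2 (q.fst_mem_support_of_mem_edges he')
  · -- Maker plays inside the branch; Breaker kills the root edge
    have hene : s(r, x) ≠ e := fun h => hrE (by rw [h]; exact heX)
    have hesub : (RGf T r x).erase e = insert s(r,x) ((EXf T r x).erase e) := by
      rw [RGf, Finset.erase_insert_of_ne hene]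
    obtain ⟨c, hc⟩ : ∃ c, (EXf T r x).card = c + 1 :=
      ⟨(EXf T r x).card - 1, by have := Finset.card_pos.2 ⟨e, heX⟩; omega⟩
    rw [hc, mwin_succ_false] at hwe
    have := hwe s(r,x) (by rw [hesub]; exact Finset.mem_insert_self _ _)
    have hboard : ((RGf T r x).erase e).erase s(r,x) = (EXf T r x).erase e := by
      rw [hesub, Finset.erase_insert]
      intro hmem
      exact hrE (Finset.mem_of_mem_erase hmem)
    rw [hboard] at this
    refine not_mwin_of_dead ?_ ?_ this
    · rw [Finset.card_erase_of_mem heX]; omega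
    · rintro S hS1 hS2 ⟨hrx, -⟩
      have := hS2 hrx
      rcases Finset.mem_union.1 this with h | h
      · rw [Finset.mem_insert] at h
        rcases h with h | h
        · exact hene h
        · exact absurd h (Finset.notMem_empty _)
      · exact hrE (Finset.mem_of_mem_erase h)

theorem pathQ_monoJ {k k' : ℕ} (h : k ≤ k') (S : Finset (Sym2 V)) :
    pathQ T r x k' S → pathQ T r x k S :=
  fun ⟨v, q, h1, h2, h3, h4⟩ => ⟨v, q, h1, h2, le_trans h h3, h4⟩

theorem RGf_subset_E (hx : T.Adj r x) : RGf T r x ⊆ T.edgeSet.toFinite.toFinset := by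
  intro e he
  rcases Finset.mem_insert.1 he with rfl | he
  · exact rx_mem_E hT hx
  · exact EXf_subset_E hT he

theorem lM_lower (hx : T.Adj r x) (k : ℕ)
    (hbeta : MWin (pathQ T r x k) (EXf T r x).card false (EXf T r x) ∅) :
    MWin (hasPathFrom T r (1 + k)) T.edgeSet.toFinite.toFinset.card true
      T.edgeSet.toFinite.toFinset ∅ := by
  have hrxE : s(r,x) ∈ T.edgeSet.toFinite.toFinset := rx_mem_E hT hx
  obtain ⟨n, hn⟩ : ∃ n, T.edgeSet.toFinite.toFinset.card = n + 1 :=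
    ⟨T.edgeSet.toFinite.toFinset.card - 1, by have := Finset.card_pos.2 ⟨_, hrxE⟩; omega⟩
  rw [hn, mwin_succ_true]
  refine ⟨s(r,x), hrxE, ?_⟩
  have hA_sub : EXf T r x ⊆ T.edgeSet.toFinite.toFinset.erase s(r,x) := fun e he =>
    Finset.mem_erase.2 ⟨fun h => (rx_not_mem_EXf hT hx hx) (h ▸ he), EXf_subset_E hT he⟩
  have hAB : EXf T r x ∪ (T.edgeSet.toFinite.toFinset.erase s(r,x) \ EXf T r x)
      = T.edgeSet.toFinite.toFinset.erase s(r,x) := Finset.union_sdiff_of_subset hA_sub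
  have hthis := mwin_union (P := hasPathFrom T r (1+k)) (hasPathFrom_monoM T r)
    pathQ_mono {s(r,x)} (fun S hS => pathQ_cons hT hx le_rfl hS) _
    (EXf T r x) (T.edgeSet.toFinite.toFinset.erase s(r,x) \ EXf T r x) ∅ {s(r,x)}
    rfl Finset.disjoint_sdiff hbeta (by simp)
  rw [hAB] at hthis
  have hcd : (T.edgeSet.toFinite.toFinset.erase s(r,x)).card = n := by
    rw [Finset.card_erase_of_mem hrxE, hn]; omega
  rw [hcd] at hthis
  have hins : insert s(r,x) (∅ : Finset (Sym2 V)) = {s(r,x)} := by simp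
  rw [hins]
  exact hthis

theorem lB_lower (hx : T.Adj r x) (hy : T.Adj r y) (hxy : x ≠ y) (m : ℕ)
    (hbx : MWin (pathQ T r x m) (EXf T r x).card false (EXf T r x) ∅)
    (hby : MWin (pathQ T r y m) (EXf T r y).card false (EXf T r y) ∅) :
    MWin (hasPathFrom T r (1 + m)) T.edgeSet.toFinite.toFinset.card false
      T.edgeSet.toFinite.toFinset ∅ := by
  have hrxE : s(r,x) ∈ T.edgeSet.toFinite.toFinset := rx_mem_E hT hx
  have hryE : s(r,y) ∈ T.edgeSet.toFinite.toFinset := rx_mem_E hT hy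
  have hrne : s(r,x) ≠ s(r,y) := fun h => hxy (sym2_eq_of_rx hx hy h)
  have hcard2 : 2 ≤ T.edgeSet.toFinite.toFinset.card := by
    have : ({s(r,x), s(r,y)} : Finset (Sym2 V)) ⊆ T.edgeSet.toFinite.toFinset := by
      intro e he
      rcases Finset.mem_insert.1 he with rfl | he
      · exact hrxE
      · rw [Finset.mem_singleton] at he; subst he; exact hryE
    have h2 : ({s(r,x), s(r,y)} : Finset (Sym2 V)).card = 2 := Finset.card_pair hrne
    have := Finset.card_le_card this
    omega
  obtain ⟨n, hn⟩ : ∃ n, T.edgeSet.toFinite.toFinset.card = n + 1 :=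
    ⟨T.edgeSet.toFinite.toFinset.card - 1, by omega⟩
  rw [hn, mwin_succ_false]
  intro e he
  -- choose the untouched child z
  obtain ⟨z, hz, hbz, hez⟩ : ∃ z, T.Adj r z ∧
      MWin (pathQ T r z m) (EXf T r z).card false (EXf T r z) ∅ ∧ e ∉ RGf T r z := by
    by_cases hcase : e ∈ RGf T r y
    · exact ⟨x, hx, hbx, fun hmem =>
        Finset.disjoint_left.1 (RGf_disjoint hT hx hy hxy) hmem hcase⟩
    · exact ⟨y, hy, hby, hcase⟩
  have hrzE : s(r,z) ∈ T.edgeSet.toFinite.toFinset := rx_mem_E hT hz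
  have hrz_ne_e : s(r,z) ≠ e := fun h => hez (h ▸ Finset.mem_insert_self _ _)
  obtain ⟨n', hn'⟩ : ∃ n', n = n' + 1 := ⟨n - 1, by omega⟩
  rw [hn', mwin_succ_true]
  refine ⟨s(r,z), Finset.mem_erase.2 ⟨hrz_ne_e, hrzE⟩, ?_⟩
  have hA_sub : EXf T r z ⊆ (T.edgeSet.toFinite.toFinset.erase e).erase s(r,z) := by
    intro e' he'
    refine Finset.mem_erase.2 ⟨fun h => (rx_not_mem_EXf hT hz hz) (h ▸ he'), ?_⟩
    refine Finset.mem_erase.2 ⟨fun h => hez (h ▸ Finset.mem_insert_of_mem he'), ?_⟩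
    exact EXf_subset_E hT he'
  have hAB : EXf T r z ∪ ((T.edgeSet.toFinite.toFinset.erase e).erase s(r,z) \ EXf T r z)
      = (T.edgeSet.toFinite.toFinset.erase e).erase s(r,z) :=
    Finset.union_sdiff_of_subset hA_sub
  have hthis := mwin_union (P := hasPathFrom T r (1+m)) (hasPathFrom_monoM T r)
    pathQ_mono {s(r,z)} (fun S hS => pathQ_cons hT hz le_rfl hS) _
    (EXf T r z) ((T.edgeSet.toFinite.toFinset.erase e).erase s(r,z) \ EXf T r z) ∅
    {s(r,z)} rfl Finset.disjoint_sdiff hbz (by simp)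
  rw [hAB] at hthis
  have hcd : ((T.edgeSet.toFinite.toFinset.erase e).erase s(r,z)).card = n' := by
    rw [Finset.card_erase_of_mem (Finset.mem_erase.2 ⟨hrz_ne_e, hrzE⟩),
      Finset.card_erase_of_mem he, hn]
    omega
  rw [hcd] at hthis
  have hins : insert s(r,z) (∅ : Finset (Sym2 V)) = {s(r,z)} := by simp
  rw [hins]
  exact hthis

theorem lM_upper (m : ℕ)
    (halpha : ∀ y, T.Adj r y →
      ¬ MWin (pathQ T r y (m+1)) (EXf T r y).card false (EXf T r y) ∅) :
    ¬ MWin (hasPathFrom T r (2 + m)) T.edgeSet.toFinite.toFinset.card true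
      T.edgeSet.toFinite.toFinset ∅ := by
  refine not_mwin_sum (I := T.neighborFinset r) (R := fun y => RGf T r y)
    (Q := fun y => RQ T r y (m+1)) ?_ ?_ ?_ _ _ ∅ rfl ?_ ?_ ?_
  · intro i hi j hj hij
    exact RGf_disjoint hT ((T.mem_neighborFinset r i).1 hi)
      ((T.mem_neighborFinset r j).1 hj) hij
  · intro i hi M e he
    exact RQ_local hT ((T.mem_neighborFinset r i).1 hi) M e he
  · intro i hi
    exact RQ_mono
  · intro e he
    obtain ⟨z, hz, hmem⟩ := edge_decomp hT ((Set.Finite.mem_toFinset _).1 he)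
    exact ⟨z, (T.mem_neighborFinset r z).2 hz, hmem⟩
  · intro S hS hP
    have h2 : 2 + m = (m + 1) + 1 := by omega
    rw [h2] at hP
    obtain ⟨z, hz, hRQ⟩ := hasPath_decomp hT hP
    exact ⟨z, (T.mem_neighborFinset r z).2 hz, hRQ⟩
  · intro i hi
    have hadj : T.Adj r i := (T.mem_neighborFinset r i).1 hi
    have hWR : T.edgeSet.toFinite.toFinset ∩ RGf T r i = RGf T r i :=
      Finset.inter_eq_right.2 (RGf_subset_E hT hadj)
    rw [hWR, Finset.empty_inter]
    exact not_mwin_region hT hadj m (halpha i hadj)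

theorem lB_upper (hx : T.Adj r x) (m : ℕ)
    (halpha : ∀ y, T.Adj r y → y ≠ x →
      ¬ MWin (pathQ T r y (m+1)) (EXf T r y).card false (EXf T r y) ∅) :
    ¬ MWin (hasPathFrom T r (2 + m)) T.edgeSet.toFinite.toFinset.card false
      T.edgeSet.toFinite.toFinset ∅ := by
  intro hw
  have hrxE : s(r,x) ∈ T.edgeSet.toFinite.toFinset := rx_mem_E hT hx
  obtain ⟨n, hn⟩ : ∃ n, T.edgeSet.toFinite.toFinset.card = n + 1 :=
    ⟨T.edgeSet.toFinite.toFinset.card - 1, by have := Finset.card_pos.2 ⟨_, hrxE⟩; omega⟩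
  rw [hn, mwin_succ_false] at hw
  have h1 := hw s(r,x) hrxE
  have hrE : s(r, x) ∉ EXf T r x := rx_not_mem_EXf hT hx hx
  refine not_mwin_sum (I := T.neighborFinset r) (R := fun y => RGf T r y)
    (Q := fun y => RQ T r y (m+1)) ?_ ?_ ?_ n (T.edgeSet.toFinite.toFinset.erase s(r,x))
    ∅ (by rw [Finset.card_erase_of_mem hrxE, hn]; omega) ?_ ?_ ?_ h1
  · intro i hi j hj hij
    exact RGf_disjoint hT ((T.mem_neighborFinset r i).1 hi)
      ((T.mem_neighborFinset r j).1 hj) hij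
  · intro i hi M e he
    exact RQ_local hT ((T.mem_neighborFinset r i).1 hi) M e he
  · intro i hi
    exact RQ_mono
  · intro e he
    obtain ⟨z, hz, hmem⟩ :=
      edge_decomp hT ((Set.Finite.mem_toFinset _).1 (Finset.mem_of_mem_erase he))
    exact ⟨z, (T.mem_neighborFinset r z).2 hz, hmem⟩
  · intro S hS hP
    have h2 : 2 + m = (m + 1) + 1 := by omega
    rw [h2] at hP
    obtain ⟨z, hz, hRQ⟩ := hasPath_decomp hT hP
    exact ⟨z, (T.mem_neighborFinset r z).2 hz, hRQ⟩
  · intro i hi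
    have hadj : T.Adj r i := (T.mem_neighborFinset r i).1 hi
    rw [Finset.empty_inter]
    rcases eq_or_ne i x with heq | hne
    · -- dead region: Breaker owns the root edge of this branch
      subst heq
      have hWR : (T.edgeSet.toFinite.toFinset.erase s(r,i)) ∩ RGf T r i = EXf T r i := by
        rw [erase_inter_comm', Finset.inter_eq_right.2 (RGf_subset_E hT hadj),
          RGf, Finset.erase_insert hrE]
      rw [hWR]
      refine not_mwin_of_dead le_rfl ?_
      rintro S hS1 hS2 ⟨hrx, -⟩
      rw [Finset.empty_union] at hS2
      exact rx_not_mem_EXf hT hadj hadj (hS2 hrx)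
    · have hWR : (T.edgeSet.toFinite.toFinset.erase s(r,x)) ∩ RGf T r i = RGf T r i := by
        rw [inter_eq_of_not_mem (fun hmem => Finset.disjoint_left.1
          (RGf_disjoint hT hx hadj (fun h => hne h.symm)) (Finset.mem_insert_self _ _) hmem),
          Finset.inter_eq_right.2 (RGf_subset_E hT hadj)]
      rw [hWR]
      exact not_mwin_region hT hadj m (halpha i hadj hne)

theorem lB_single (hx : T.Adj r x) (huniq : ∀ y, T.Adj r y → y = x) :
    ¬ MWin (hasPathFrom T r 1) T.edgeSet.toFinite.toFinset.card false
      T.edgeSet.toFinite.toFinset ∅ := by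
  intro hw
  have hrxE : s(r,x) ∈ T.edgeSet.toFinite.toFinset := rx_mem_E hT hx
  obtain ⟨n, hn⟩ : ∃ n, T.edgeSet.toFinite.toFinset.card = n + 1 :=
    ⟨T.edgeSet.toFinite.toFinset.card - 1, by have := Finset.card_pos.2 ⟨_, hrxE⟩; omega⟩
  rw [hn, mwin_succ_false] at hw
  have h1 := hw s(r,x) hrxE
  refine not_mwin_of_dead (le_of_eq ?_) ?_ h1
  · rw [Finset.card_erase_of_mem hrxE, hn]; omega
  · rintro S hS1 hS2 hP
    obtain ⟨z, hz, hrz, -⟩ := hasPath_decomp hT (show hasPathFrom T r (0+1) S from hP)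
    have hzx := huniq z hz
    subst hzx
    have := hS2 hrz
    rw [Finset.empty_union] at this
    exact (Finset.mem_erase.1 this).1 rfl

theorem no_child (h0 : ∀ y, ¬ T.Adj r y) (b : Bool) :
    ¬ MWin (hasPathFrom T r 1) T.edgeSet.toFinite.toFinset.card b
      T.edgeSet.toFinite.toFinset ∅ := by
  refine not_mwin_of_dead le_rfl ?_
  intro S hS1 hS2 hP
  obtain ⟨z, hz, -⟩ := hasPath_decomp hT (show hasPathFrom T r (0+1) S from hP)
  exact h0 z hz

end Assemble

end MBGame

/-- **Values of the rooted path game on a tree.** Let `T` be a tree rooted at `r`, with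
subtrees `T_x` rooted at the children `x` of `r`, and `μ x = ℓ_B(T_x, x)`. If `r` has no
children then `ℓ_M(T,r) = ℓ_B(T,r) = 0`. Otherwise, for any child `x₁` maximizing `μ`,
`ℓ_M(T,r) = 1 + μ x₁`; and `ℓ_B(T,r) = 1 + max_{x ≠ x₁} μ x` if `r` has at least two
children (the second largest value of `μ`, in decreasing order), while `ℓ_B(T,r) = 0`
if `x₁` is the only child. -/
theorem stmt17 {V : Type*} [Fintype V] [DecidableEq V]
    (T : SimpleGraph V) [DecidableRel T.Adj] (hT : T.IsTree) (r : V)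
    (μ : V → ℕ)
    (hμ : ∀ x ∈ T.neighborFinset r,
      μ x = lB (T.induce (childVerts T r x)) ⟨x, SimpleGraph.Reachable.refl x⟩) :
    (T.neighborFinset r = ∅ → lM T r = 0 ∧ lB T r = 0) ∧
    (∀ x₁ ∈ T.neighborFinset r, (∀ y ∈ T.neighborFinset r, μ y ≤ μ x₁) →
      lM T r = 1 + μ x₁ ∧
      (∀ h2 : ((T.neighborFinset r).erase x₁).Nonempty,
        lB T r = 1 + ((T.neighborFinset r).erase x₁).sup' h2 μ) ∧
      ((T.neighborFinset r).erase x₁ = ∅ → lB T r = 0)) := by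
  classical
  open MBGame in
  constructor
  · intro hN
    have h0 : ∀ y, ¬ T.Adj r y := by
      intro y hy
      have hmem : y ∈ T.neighborFinset r := (T.mem_neighborFinset r y).2 hy
      rw [hN] at hmem
      exact absurd hmem (Finset.notMem_empty _)
    constructor
    · exact game_value T r true 0 (zero_mem_S T r true) (no_child hT h0 true)
    · exact game_value T r false 0 (zero_mem_S T r false) (no_child hT h0 false)
  · intro x₁ hx₁ hmax
    have had1 : T.Adj r x₁ := (T.mem_neighborFinset r x₁).1 hx₁
    have hbeta : ∀ y, T.Adj r y →
        MWin (pathQ T r y (μ y)) (EXf T r y).card false (EXf T r y) ∅ := by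
      intro y hy
      have h := subtree_beta hT hy
      rwa [← hμ y ((T.mem_neighborFinset r y).2 hy)] at h
    have halpha : ∀ y, T.Adj r y →
        ¬ MWin (pathQ T r y (μ y + 1)) (EXf T r y).card false (EXf T r y) ∅ := by
      intro y hy
      have h := subtree_alpha hT hy
      rwa [← hμ y ((T.mem_neighborFinset r y).2 hy)] at h
    refine ⟨?_, ?_, ?_⟩
    · -- lM = 1 + μ x₁
      refine game_value T r true (1 + μ x₁) (lM_lower hT had1 (μ x₁) (hbeta x₁ had1)) ?_
      have hup := lM_upper hT (μ x₁) (fun y hy hcon => halpha y hy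
        (mwin_mono_P (pathQ_monoJ hT (by
          have := hmax y ((T.mem_neighborFinset r y).2 hy); omega)) hcon))
      intro hcon
      have heq : 1 + μ x₁ + 1 = 2 + μ x₁ := by omega
      rw [heq] at hcon
      exact hup hcon
    · intro h2
      obtain ⟨x₂, hx₂, hx₂eq⟩ := Finset.exists_mem_eq_sup' h2 μ
      have had2 : T.Adj r x₂ :=
        (T.mem_neighborFinset r x₂).1 (Finset.mem_of_mem_erase hx₂)
      have hne : x₂ ≠ x₁ := Finset.ne_of_mem_erase hx₂
      set m := ((T.neighborFinset r).erase x₁).sup' h2 μ with hm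
      have hmx1 : m ≤ μ x₁ := by
        rw [hx₂eq]; exact hmax x₂ (Finset.mem_of_mem_erase hx₂)
      have hmx2 : m ≤ μ x₂ := le_of_eq hx₂eq
      refine game_value T r false (1 + m) ?_ ?_
      · exact lB_lower hT had1 had2 (Ne.symm hne) m
          (mwin_mono_P (pathQ_monoJ hT hmx1) (hbeta x₁ had1))
          (mwin_mono_P (pathQ_monoJ hT hmx2) (hbeta x₂ had2))
      · have hup := lB_upper hT had1 m ?halpha'
        · intro hcon
          have heq : 1 + m + 1 = 2 + m := by omega
          rw [heq] at hcon
          exact hup hcon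
        case halpha' =>
          intro y hy hyx
          have hymem : y ∈ (T.neighborFinset r).erase x₁ :=
            Finset.mem_erase.2 ⟨hyx, (T.mem_neighborFinset r y).2 hy⟩
          have hμy : μ y ≤ m := Finset.le_sup' μ hymem
          intro hcon
          exact halpha y hy (mwin_mono_P (pathQ_monoJ hT (by omega)) hcon)
    · intro hempty
      have huniq : ∀ y, T.Adj r y → y = x₁ := by
        intro y hy
        by_contra hne
        have : y ∈ (T.neighborFinset r).erase x₁ :=
          Finset.mem_erase.2 ⟨hne, (T.mem_neighborFinset r y).2 hy⟩
        rw [hempty] at this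
        exact absurd this (Finset.notMem_empty _)
      exact game_value T r false 0 (zero_mem_S T r false) (lB_single hT had1 huniq)
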